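/- arXiv:2312.12085 — 2 statements merged into one kernel-verified Lean document; each statement's English description precedes it below -/
import Mathlib

section
/- Let ψ : ℝ → ℝ satisfy ψ(T) ≥ T for all sufficiently large T and ψ(T) ~ T as T → ∞, and let c₀ ∈ ℝ be such that ∫₀^{ψ(T)} |ζ(1/2+it)|² dt = T ln T + (γ − ln 2π) T + c₀ + O(ln T / T) as T → ∞. Assume Dirichlet's estimate. Then D(ψ(T)) − D(T) − ∫_{ψ(T)}^{ψ(ψ(T))} |ζ(1/2+it)|² dt = (γ + ln 2π − 1)(ψ(T) − T) + O(√T) as T → ∞. -/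
open Filter Asymptotics Real

/-- Dirichlet summatory divisor function `D(x) = ∑_{n ≤ x} d(n)`. -/
noncomputable def D (x : ℝ) : ℝ := ∑ n ∈ Finset.Icc 1 ⌊x⌋₊, ((Nat.divisors n).card : ℝ)

/-- `|ζ(1/2 + it)|²`. -/
noncomputable def zsq (t : ℝ) : ℝ := ‖riemannZeta (1/2 + t * Complex.I)‖ ^ 2

/-- `S₁(t) = (1/π) ∫₀ᵗ arg ζ(1/2 + iu) du`. -/
noncomputable def S1 (t : ℝ) : ℝ := (1 / Real.pi) * ∫ u in (0:ℝ)..t, (riemannZeta (1/2 + u * Complex.I)).arg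

/-- Euler–Mascheroni constant `γ`. -/
noncomputable def γ : ℝ := Real.eulerMascheroniConstant
lemma continuous_zsq : Continuous zsq := by
  refine continuous_iff_continuousAt.mpr fun t => ?_
  have h : (1/2 + (t:ℂ) * Complex.I) ≠ 1 := by
    intro h
    have := congrArg Complex.re h
    simp [Complex.add_re, Complex.mul_re] at this
  have hζ : ContinuousAt riemannZeta (1/2 + t * Complex.I) :=
    (differentiableAt_riemannZeta h).continuousAt
  have hline : ContinuousAt (fun t : ℝ => (1/2 + (t:ℂ) * Complex.I)) t := by fun_prop
  have h1 : ContinuousAt (fun t : ℝ => riemannZeta (1/2 + t * Complex.I)) t :=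
    Filter.Tendsto.comp hζ hline
  exact (h1.norm.pow 2)

lemma integral_split (a b : ℝ) :
    (∫ t in a..b, zsq t) = (∫ t in (0:ℝ)..b, zsq t) - (∫ t in (0:ℝ)..a, zsq t) := by
  rw [eq_sub_iff_add_eq, add_comm]
  exact intervalIntegral.integral_add_adjacent_intervals
    (continuous_zsq.intervalIntegrable _ _) (continuous_zsq.intervalIntegrable _ _)

/-- Under the hypotheses on ψ, the almost-exact HL formula and Dirichlet's estimate, one has
`D(ψ(T)) − D(T) − ∫_{ψ(T)}^{ψ(ψ(T))} |ζ|² = (γ + ln 2π − 1)(ψ(T) − T) + O(√T)`. -/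
theorem D_increment (ψ : ℝ → ℝ) (c₀ : ℝ)
    (hge : ∀ᶠ T : ℝ in atTop, T ≤ ψ T)
    (hsim : Tendsto (fun T : ℝ => ψ T / T) atTop (nhds 1))
    (hHL : (fun T : ℝ => (∫ t in (0:ℝ)..ψ T, zsq t) -
        (T * Real.log T + (γ - Real.log (2 * Real.pi)) * T + c₀)) =O[atTop]
      (fun T : ℝ => Real.log T / T))
    (hDir : (fun T : ℝ => D T - (T * Real.log T + (2 * γ - 1) * T)) =O[atTop]
      (fun T : ℝ => Real.sqrt T)) :
    (fun T : ℝ => (D (ψ T) - D T - ∫ t in ψ T..ψ (ψ T), zsq t) -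
        (γ + Real.log (2 * Real.pi) - 1) * (ψ T - T)) =O[atTop]
      (fun T : ℝ => Real.sqrt T) := by
  have hψtop : Tendsto ψ atTop atTop := tendsto_atTop_mono' _ hge tendsto_id
  -- √(ψ T) = O(√T)
  have hsqrt : (fun T : ℝ => Real.sqrt (ψ T)) =O[atTop] (fun T : ℝ => Real.sqrt T) := by
    apply isBigO_of_div_tendsto_nhds (c := 1)
    · have h1 : Tendsto (fun T : ℝ => Real.sqrt (ψ T / T)) atTop (nhds 1) := by
        have := (Real.continuous_sqrt.tendsto 1).comp hsim
        simpa [Function.comp_def] using this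
      refine h1.congr' ?_
      filter_upwards [eventually_gt_atTop 0, hge] with T hT hgeT
      have h0 : 0 ≤ ψ T := le_trans hT.le hgeT
      simp [Pi.div_apply, Real.sqrt_div h0]
    · filter_upwards [eventually_gt_atTop 0] with T hT h0
      exact absurd h0 (by positivity)
  -- log T / T = O(√T)
  have hlogO : (fun T : ℝ => Real.log T / T) =O[atTop] (fun T : ℝ => Real.sqrt T) := by
    apply IsBigO.of_bound 1
    filter_upwards [eventually_ge_atTop 1] with T hT
    have h0 : (0:ℝ) < T := lt_of_lt_of_le one_pos hT
    have hl : 0 ≤ Real.log T := Real.log_nonneg hT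
    have hlt : Real.log T ≤ T := (Real.log_le_sub_one_of_pos h0).trans (by linarith)
    have h2 : Real.log T / T ≤ 1 := by
      rw [div_le_one h0]; exact hlt
    have h3 : (1:ℝ) ≤ Real.sqrt T := Real.one_le_sqrt.mpr hT
    rw [Real.norm_eq_abs, Real.norm_eq_abs, one_mul,
      abs_of_nonneg (by positivity : (0:ℝ) ≤ Real.log T / T),
      abs_of_nonneg (Real.sqrt_nonneg T)]
    exact h2.trans h3
  have hEDψ : (fun T : ℝ => D (ψ T) -
      (ψ T * Real.log (ψ T) + (2 * γ - 1) * ψ T)) =O[atTop]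
      (fun T : ℝ => Real.sqrt T) := (hDir.comp_tendsto hψtop).trans hsqrt
  have hEZ : (fun T : ℝ => (∫ t in (0:ℝ)..ψ T, zsq t) -
      (T * Real.log T + (γ - Real.log (2 * Real.pi)) * T + c₀)) =O[atTop]
      (fun T : ℝ => Real.sqrt T) := hHL.trans hlogO
  have hEZψ : (fun T : ℝ => (∫ t in (0:ℝ)..ψ (ψ T), zsq t) -
      (ψ T * Real.log (ψ T) + (γ - Real.log (2 * Real.pi)) * ψ T + c₀)) =O[atTop]
      (fun T : ℝ => Real.sqrt T) := (hEZ.comp_tendsto hψtop).trans hsqrt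
  have hsum := ((hEDψ.sub hDir).sub hEZψ).add hEZ
  refine hsum.congr' ?_ (EventuallyEq.refl _ _)
  filter_upwards with T
  rw [integral_split (ψ T) (ψ (ψ T))]
  ring
end

section
/- Theorem 2 (the second D-equivalent of the Fermat–Wiles theorem): Let ψ : ℝ → ℝ be such that for every fixed real x > 0, lim_{τ→∞} (1/ln τ) · ln( D(ψ(τ^x)) − D(τ^x) ) = x. Then the following are equivalent: (i) for all positive integers x, y, z, n with n ≥ 3, writing F = (xⁿ + yⁿ)/zⁿ, the function τ ↦ (1/ln τ) · ln( D(ψ(exp(F ln τ))) − D(exp(F ln τ)) ) does NOT tend to 1 as τ → ∞; (ii) for all positive integers x, y, z, n with n ≥ 3, xⁿ + yⁿ ≠ zⁿ. -/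
open Filter Asymptotics Real

/-- Theorem 2: the second `D`-equivalent of the Fermat–Wiles theorem. -/
theorem D_equivalent_fermat_wiles_two (ψ : ℝ → ℝ)
    (h : ∀ x : ℝ, 0 < x →
      Tendsto (fun τ : ℝ => (1 / Real.log τ) * Real.log (D (ψ (τ ^ x)) - D (τ ^ x)))
        atTop (nhds x)) :
    (∀ x y z n : ℕ, 0 < x → 0 < y → 0 < z → 3 ≤ n →
      ¬ Tendsto (fun τ : ℝ => (1 / Real.log τ) *
          Real.log (D (ψ (Real.exp (((x:ℝ)^n + (y:ℝ)^n) / (z:ℝ)^n * Real.log τ))) -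
            D (Real.exp (((x:ℝ)^n + (y:ℝ)^n) / (z:ℝ)^n * Real.log τ))))
        atTop (nhds 1)) ↔
    (∀ x y z n : ℕ, 0 < x → 0 < y → 0 < z → 3 ≤ n → x^n + y^n ≠ z^n) := by
  constructor
  · intro hi x y z n hx hy hz hn heq
    have hF : ((x:ℝ)^n + (y:ℝ)^n) / (z:ℝ)^n = 1 := by
      have : ((x:ℝ)^n + (y:ℝ)^n) = (z:ℝ)^n := by exact_mod_cast congrArg (Nat.cast : ℕ → ℝ) heq
      rw [this]
      field_simp
    apply hi x y z n hx hy hz hn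
    rw [hF]
    have h1 := h 1 one_pos
    refine h1.congr' ?_
    filter_upwards [eventually_gt_atTop (0:ℝ)] with τ hτ
    rw [Real.rpow_one, one_mul, Real.exp_log hτ]
  · intro hii x y z n hx hy hz hn hten
    set F : ℝ := ((x:ℝ)^n + (y:ℝ)^n) / (z:ℝ)^n with hFdef
    have hFpos : 0 < F := by
      apply div_pos
      · positivity
      · positivity
    have hF := h F hFpos
    have hF' : Tendsto (fun τ : ℝ => (1 / Real.log τ) *
        Real.log (D (ψ (Real.exp (F * Real.log τ))) - D (Real.exp (F * Real.log τ))))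
        atTop (nhds F) := by
      refine hF.congr' ?_
      filter_upwards [eventually_gt_atTop (0:ℝ)] with τ hτ
      rw [Real.rpow_def_of_pos hτ, mul_comm (Real.log τ) F]
    have : F = 1 := tendsto_nhds_unique hF' hten
    have hnat : x^n + y^n = z^n := by
      have hz' : ((z:ℝ))^n ≠ 0 := by positivity
      have : ((x:ℝ)^n + (y:ℝ)^n) = (z:ℝ)^n := by
        rw [hFdef, div_eq_one_iff_eq hz'] at this
        linarith
      exact_mod_cast this
    exact hii x y z n hx hy hz hn hnat
end
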